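/- Let n ≥ 1, let 0 < τ_1 ≤ τ_2 ≤ … ≤ τ_n be real numbers, and let S ≥ 1 be a natural number. Then there exist natural numbers B_1,…,B_n ≥ 0 such that ∑_{i=1}^n B_i ≥ S and, for every index i with B_i ≥ 1, τ_i·(1 + B_i) ≤ 2 · min_{j ∈ {1,…,n}} (∑_{i'=1}^j 1/τ_{i'})^{-1}·(S + j). -/

import Mathlib

open Finset

theorem stmt3 (n : ℕ) (hn : 1 ≤ n) (τ : ℕ → ℝ)
    (hpos : ∀ i, 1 ≤ i → i ≤ n → 0 < τ i)
    (hmono : ∀ i j, 1 ≤ i → i ≤ j → j ≤ n → τ i ≤ τ j)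
    (S : ℕ) (hS : 1 ≤ S) :
    ∃ B : ℕ → ℕ,
      S ≤ ∑ i ∈ Finset.Icc 1 n, B i ∧
      ∀ i ∈ Finset.Icc 1 n, 1 ≤ B i →
        τ i * (1 + (B i : ℝ)) ≤
          2 * (Finset.Icc 1 n).inf' (Finset.nonempty_Icc.mpr hn)
            (fun j => (∑ i' ∈ Finset.Icc 1 j, 1/τ i')⁻¹ * ((S : ℝ) + j)) := by
  set f : ℕ → ℝ := fun j => (∑ i' ∈ Finset.Icc 1 j, 1/τ i')⁻¹ * ((S : ℝ) + j) with hf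
  set T : ℝ := 2 * (Finset.Icc 1 n).inf' (Finset.nonempty_Icc.mpr hn) f with hTdef
  have hsumpos : ∀ j ∈ Finset.Icc 1 n, 0 < ∑ i' ∈ Finset.Icc 1 j, 1/τ i' := by
    intro j hj
    rw [Finset.mem_Icc] at hj
    apply Finset.sum_pos
    · intro i hi
      rw [Finset.mem_Icc] at hi
      exact one_div_pos.mpr (hpos i hi.1 (le_trans hi.2 hj.2))
    · exact Finset.nonempty_Icc.mpr hj.1
  have hfpos : ∀ j ∈ Finset.Icc 1 n, 0 < f j := by
    intro j hj
    apply mul_pos (inv_pos.mpr (hsumpos j hj))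
    have : (0:ℝ) < (S:ℝ) := by exact_mod_cast hS
    positivity
  have hTpos : 0 < T := by
    rw [hTdef]
    have : 0 < (Finset.Icc 1 n).inf' (Finset.nonempty_Icc.mpr hn) f := by
      rw [Finset.lt_inf'_iff]; exact hfpos
    linarith
  -- minimizer
  obtain ⟨j₀, hj₀mem, hj₀⟩ := Finset.exists_mem_eq_inf' (Finset.nonempty_Icc.mpr hn) f
  refine ⟨fun i => ⌊T / τ i⌋₊ - 1, ?_, ?_⟩
  · -- sum bound
    have hsub : Finset.Icc 1 j₀ ⊆ Finset.Icc 1 n := by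
      rw [Finset.mem_Icc] at hj₀mem
      exact Finset.Icc_subset_Icc_right hj₀mem.2
    have hlb : ∀ i ∈ Finset.Icc 1 j₀, T / τ i - 2 ≤ ((⌊T / τ i⌋₊ - 1 : ℕ) : ℝ) := by
      intro i hi
      have h1 : (↑(⌊T / τ i⌋₊) : ℝ) - 1 ≤ ((⌊T / τ i⌋₊ - 1 : ℕ) : ℝ) := by
        rcases Nat.eq_zero_or_pos ⌊T / τ i⌋₊ with h | h
        · simp [h]
        · rw [Nat.cast_sub h]; simp
      have h2 : T / τ i - 1 ≤ (↑(⌊T / τ i⌋₊) : ℝ) := by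
        have := Nat.lt_floor_add_one (T / τ i)
        linarith
      linarith
    have hsum1 : (S : ℝ) ≤ ∑ i ∈ Finset.Icc 1 j₀, ((⌊T / τ i⌋₊ - 1 : ℕ) : ℝ) := by
      have hge : ∑ i ∈ Finset.Icc 1 j₀, (T / τ i - 2)
          ≤ ∑ i ∈ Finset.Icc 1 j₀, ((⌊T / τ i⌋₊ - 1 : ℕ) : ℝ) :=
        Finset.sum_le_sum hlb
      have hsplit : ∑ i ∈ Finset.Icc 1 j₀, (T / τ i - 2)
          = T * (∑ i ∈ Finset.Icc 1 j₀, 1 / τ i) - 2 * j₀ := by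
        rw [Finset.sum_sub_distrib, Finset.mul_sum]
        congr 1
        · apply Finset.sum_congr rfl; intro i _; ring
        · rw [Finset.sum_const, Nat.card_Icc]
          simp; ring
      have hTval : T = 2 * f j₀ := by rw [hTdef, hj₀]
      have hspos := hsumpos j₀ hj₀mem
      have hTmul : T * (∑ i ∈ Finset.Icc 1 j₀, 1 / τ i) = 2 * ((S : ℝ) + j₀) := by
        rw [hTval, hf]
        field_simp
      have hS' : (1:ℝ) ≤ (S:ℝ) := by exact_mod_cast hS
      calc (S : ℝ) ≤ 2 * ((S:ℝ) + j₀) - 2 * j₀ := by linarith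
        _ = ∑ i ∈ Finset.Icc 1 j₀, (T / τ i - 2) := by rw [hsplit, hTmul]
        _ ≤ _ := hge
    have hsum2 : ∑ i ∈ Finset.Icc 1 j₀, ((⌊T / τ i⌋₊ - 1 : ℕ) : ℝ)
        ≤ ∑ i ∈ Finset.Icc 1 n, ((⌊T / τ i⌋₊ - 1 : ℕ) : ℝ) := by
      apply Finset.sum_le_sum_of_subset_of_nonneg hsub
      intro i _ _; positivity
    have : (S : ℝ) ≤ ((∑ i ∈ Finset.Icc 1 n, (⌊T / τ i⌋₊ - 1) : ℕ) : ℝ) := by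
      rw [Nat.cast_sum]; exact le_trans hsum1 hsum2
    exact_mod_cast this
  · intro i hi hBi
    rw [Finset.mem_Icc] at hi
    have hτ := hpos i hi.1 hi.2
    have hBi' : 1 ≤ ⌊T / τ i⌋₊ - 1 := hBi
    have hfl : 2 ≤ ⌊T / τ i⌋₊ := by omega
    have hcast : 1 + ((⌊T / τ i⌋₊ - 1 : ℕ) : ℝ) = (⌊T / τ i⌋₊ : ℝ) := by
      rw [Nat.cast_sub (by omega)]; simp
    rw [hcast]
    have hfloor : (⌊T / τ i⌋₊ : ℝ) ≤ T / τ i :=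
      Nat.floor_le (by positivity)
    calc τ i * (⌊T / τ i⌋₊ : ℝ) ≤ τ i * (T / τ i) := by
          exact mul_le_mul_of_nonneg_left hfloor (le_of_lt hτ)
      _ = T := by field_simp
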